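/- Let D be an integrable real-valued random variable whose cumulative distribution function H is continuous on ℝ, let c ≥ 0, and let w ∈ ℝⁿ. Define F : ℝⁿ → ℝ by F(u) = c · E[(D − Σ_{k=1}^n w_k u_k)⁺]. Then F is differentiable on ℝⁿ, and for every u ∈ ℝⁿ and every index j, the partial derivative satisfies ∂F/∂u_j (u) = c · w_j · (H(Σ_{k=1}^n w_k u_k) − 1). -/

import Mathlib

open MeasureTheory Set

/-- Let `D` be an integrable random variable whose CDF `H` is continuous on `ℝ`,
`c ≥ 0` and `w ∈ ℝⁿ`.  Define `F(u) = c · E[(D − Σ_k w_k u_k)⁺]`.  Then `F` is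
differentiable and `∂F/∂u_j (u) = c · w_j · (H(Σ_k w_k u_k) − 1)`. -/
theorem frankWolfe_partial_derivative
    {Ω : Type*} [MeasurableSpace Ω] (μ : Measure Ω) [IsProbabilityMeasure μ]
    (D : Ω → ℝ) (hDm : Measurable D) (hDint : Integrable D μ)
    (H : ℝ → ℝ) (hH : ∀ ζ, H ζ = (μ {ω | D ω ≤ ζ}).toReal)
    (hHcont : Continuous H)
    (c : ℝ) (hc : 0 ≤ c) (n : ℕ) (w : Fin n → ℝ)
    (F : (Fin n → ℝ) → ℝ)
    (hF : ∀ u, F u = c * ∫ ω, max (D ω - ∑ k, w k * u k) 0 ∂μ) :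
    Differentiable ℝ F ∧
      ∀ (u : Fin n → ℝ) (j : Fin n),
        fderiv ℝ F u (Pi.single j 1) = c * w j * (H (∑ k, w k * u k) - 1) := by
  classical
  -- the tail function g s = 1 - H s = μ {D > s}
  set g : ℝ → ℝ := fun s => 1 - H s with hgdef
  have hgcont : Continuous g := continuous_const.sub hHcont
  have hgEq : ∀ s, g s = (μ {ω | s < D ω}).toReal := by
    intro s
    have hc' : {ω | s < D ω} = {ω | D ω ≤ s}ᶜ := by ext ω; simp [not_le]
    have hms : MeasurableSet {ω | D ω ≤ s} := hDm measurableSet_Iic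
    have h1 : μ {ω | D ω ≤ s} ≤ 1 := prob_le_one
    rw [hgdef]
    simp only
    rw [hH s, hc', measure_compl hms (measure_ne_top μ _), measure_univ,
      ENNReal.toReal_sub_of_le h1 ENNReal.one_ne_top, ENNReal.toReal_one]
  -- integrability of the positive part
  have hpos_int : ∀ z : ℝ, Integrable (fun ω => max (D ω - z) 0) μ := fun z =>
    (hDint.sub (integrable_const z)).pos_part
  -- translation map
  have hmp : ∀ z : ℝ, MeasurePreserving (fun t : ℝ => t + z) volume volume := fun z =>
    measurePreserving_add_right volume z
  have hemb : ∀ z : ℝ, MeasurableEmbedding (fun t : ℝ => t + z) := fun z =>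
    (Homeomorph.addRight z).measurableEmbedding
  have hpre : ∀ z : ℝ, (fun t : ℝ => t + z) ⁻¹' Ioi z = Ioi 0 := by
    intro z; ext t; simp
  have hsetEq : ∀ z t : ℝ, 0 < t → {a | t < max (D a - z) 0} = {ω | t + z < D ω} := by
    intro z t ht
    ext ω
    simp only [Set.mem_setOf_eq, lt_max_iff]
    constructor
    · rintro (h | h)
      · linarith
      · linarith
    · intro h; left; linarith
  -- layer cake formula
  have key : ∀ z : ℝ, (∫ ω, max (D ω - z) 0 ∂μ) = ∫ s in Ioi z, g s := by
    intro z
    rw [(hpos_int z).integral_eq_integral_meas_lt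
      (Filter.Eventually.of_forall fun ω => le_max_right _ _)]
    have h1 : (∫ t in Ioi (0:ℝ), μ.real {a | t < max (D a - z) 0})
        = ∫ t in Ioi (0:ℝ), g (t + z) := by
      apply setIntegral_congr_fun measurableSet_Ioi
      intro t ht
      show (μ {a | t < max (D a - z) 0}).toReal = g (t + z)
      rw [hgEq, hsetEq z t ht]
    rw [h1, ← hpre z, (hmp z).setIntegral_preimage_emb (hemb z)]
  -- integrability of g on right tails
  have hgint : ∀ z : ℝ, IntegrableOn g (Ioi z) := by
    intro z
    refine ⟨hgcont.aestronglyMeasurable.restrict, ?_⟩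
    have hnn : ∀ s, 0 ≤ g s := fun s => by rw [hgEq]; positivity
    have h2 : (∫⁻ s in Ioi z, ‖g s‖ₑ ∂volume) = ∫⁻ s in Ioi z, μ {ω | s < D ω} := by
      apply setLIntegral_congr_fun measurableSet_Ioi
      intro s _
      beta_reduce
      rw [Real.enorm_eq_ofReal (hnn s), hgEq,
        ENNReal.ofReal_toReal (measure_ne_top μ _)]
    have h3 : (∫⁻ s in Ioi z, μ {ω | s < D ω}) =
        ∫⁻ t in Ioi (0:ℝ), μ {a | t < max (D a - z) 0} := by
      have := ((hmp z).setLIntegral_comp_preimage_emb (hemb z)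
        (fun s => μ {ω | s < D ω}) (Ioi z)).symm
      rw [hpre z] at this
      rw [this]
      apply setLIntegral_congr_fun measurableSet_Ioi
      exact fun t ht => by beta_reduce; rw [hsetEq z t ht]
    have h4 : (∫⁻ t in Ioi (0:ℝ), μ {a | t < max (D a - z) 0})
        = ∫⁻ ω, ENNReal.ofReal (max (D ω - z) 0) ∂μ :=
      (lintegral_eq_lintegral_meas_lt μ
        (Filter.Eventually.of_forall fun ω => le_max_right _ _)
        (hpos_int z).aemeasurable).symm
    rw [HasFiniteIntegral, h2, h3, h4]
    exact (hpos_int z).lintegral_lt_top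
  -- the shortfall function and its representation
  set φ : ℝ → ℝ := fun z => ∫ ω, max (D ω - z) 0 ∂μ with hφdef
  have hsplit : ∀ a b : ℝ, a ≤ b → φ a = (∫ s in a..b, g s) + φ b := by
    intro a b hab
    rw [hφdef]
    simp only
    rw [key a, key b, intervalIntegral.integral_of_le hab,
      ← setIntegral_union (Set.Ioc_disjoint_Ioi le_rfl) measurableSet_Ioi
        ((hgint a).mono_set Set.Ioc_subset_Ioi_self) (hgint b),
      Set.Ioc_union_Ioi_eq_Ioi hab]
  have hφrepr : ∀ z : ℝ, φ z = φ 0 - ∫ s in (0:ℝ)..z, g s := by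
    intro z
    rcases le_total 0 z with h | h
    · have := hsplit 0 z h; linarith
    · have := hsplit z 0 h
      rw [intervalIntegral.integral_symm] at this
      linarith
  -- derivative of φ
  have hφderiv : ∀ ζ : ℝ, HasDerivAt φ (H ζ - 1) ζ := by
    intro ζ
    have h1 : HasDerivAt (fun z => ∫ s in (0:ℝ)..z, g s) (g ζ) ζ :=
      intervalIntegral.integral_hasDerivAt_right (hgcont.intervalIntegrable 0 ζ)
        hgcont.aestronglyMeasurable.stronglyMeasurableAtFilter hgcont.continuousAt
    have h2 : HasDerivAt (fun z => φ 0 - ∫ s in (0:ℝ)..z, g s) (-(g ζ)) ζ :=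
      h1.const_sub (φ 0)
    have h3 : -(g ζ) = H ζ - 1 := by rw [hgdef]; ring
    rw [h3] at h2
    exact h2.congr_of_eventuallyEq (Filter.Eventually.of_forall fun z => (hφrepr z))
  -- the linear map u ↦ ∑ k, w k * u k
  set L : (Fin n → ℝ) →L[ℝ] ℝ := ∑ k, w k • ContinuousLinearMap.proj k with hLdef
  have hLapp : ∀ v : Fin n → ℝ, L v = ∑ k, w k * v k := by
    intro v
    rw [hLdef]
    simp [ContinuousLinearMap.sum_apply]
  have hLsingle : ∀ j : Fin n, L (Pi.single j 1) = w j := by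
    intro j
    rw [hLapp]
    rw [Finset.sum_eq_single j]
    · simp
    · intro k _ hk; simp [Pi.single_apply, hk]
    · simp
  -- F in terms of φ and L
  have hFeq : F = fun u => c * φ (L u) := by
    funext u
    rw [hF u, hLapp]
  -- main differentiability statement
  have hFderiv : ∀ u : Fin n → ℝ,
      HasFDerivAt F ((c * (H (L u) - 1)) • L) u := by
    intro u
    have h1 : HasFDerivAt (⇑L) L u := L.hasFDerivAt
    have h2 : HasFDerivAt (φ ∘ ⇑L) ((H (L u) - 1) • L) u :=
      (hφderiv (L u)).comp_hasFDerivAt u h1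
    have h3 : HasFDerivAt (fun v => c * (φ ∘ ⇑L) v)
        (c • ((H (L u) - 1) • L)) u := h2.const_mul c
    rw [smul_smul] at h3
    rw [hFeq]
    exact h3
  constructor
  · exact fun u => (hFderiv u).differentiableAt
  · intro u j
    have hζ : L u = ∑ k, w k * u k := hLapp u
    rw [(hFderiv u).fderiv]
    simp only [ContinuousLinearMap.smul_apply]
    rw [hLsingle j, hζ, smul_eq_mul]
    ring
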